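/- For distinct points x₁,…,x_m ∈ ℝ^d and σ > 0, the m×m Gaussian kernel matrix K with entries K_{ij} = exp(−‖xᵢ−xⱼ‖²/σ) is invertible (has full rank). -/

import Mathlib

open MeasureTheory Real

private lemma gaussKer_key {d : ℕ} (t u v : EuclideanSpace ℝ (Fin d)) :
    ‖t - u‖^2 + ‖t - v‖^2 = 2 * ‖t - (2:ℝ)⁻¹ • (u + v)‖^2 + ‖u - v‖^2 / 2 := by
  have h := parallelogram_law_with_norm ℝ (t - (2:ℝ)⁻¹ • (u+v)) ((2:ℝ)⁻¹ • (u - v))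
  have e1 : t - (2:ℝ)⁻¹ • (u+v) + (2:ℝ)⁻¹ • (u - v) = t - v := by module
  have e2 : t - (2:ℝ)⁻¹ • (u+v) - (2:ℝ)⁻¹ • (u - v) = t - u := by module
  rw [e1, e2] at h
  have e3 : ‖(2:ℝ)⁻¹ • (u - v)‖ = 2⁻¹ * ‖u - v‖ := by
    rw [norm_smul]; norm_num
  rw [e3] at h
  nlinarith [h]

private lemma gaussKer_prod {d : ℕ} (σ : ℝ) (hσ : 0 < σ) (u v t : EuclideanSpace ℝ (Fin d)) :
    Real.exp (-(2/σ) * ‖t - u‖^2) * Real.exp (-(2/σ) * ‖t - v‖^2)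
      = Real.exp (-(4/σ) * ‖t - (2:ℝ)⁻¹ • (u + v)‖^2) * Real.exp (-(1/σ) * ‖u - v‖^2) := by
  rw [← Real.exp_add, ← Real.exp_add]
  congr 1
  have hk := gaussKer_key t u v
  linear_combination (-(2/σ)) * hk

private lemma gaussKer_integrable {d : ℕ} (b : ℝ) (hb : 0 < b) :
    Integrable (fun u : EuclideanSpace ℝ (Fin d) => Real.exp (-b * ‖u‖^2)) := by
  have h := (GaussianFourier.integrable_cexp_neg_mul_sq_norm_add
    (V := EuclideanSpace ℝ (Fin d)) (b := (b:ℂ)) (by simpa using hb) 0 0).norm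
  refine h.congr (Filter.Eventually.of_forall fun u => ?_)
  simp only [Complex.norm_exp]
  have e : (-(b:ℂ) * (‖u‖:ℂ)^2 + 0 * ((inner ℝ (0 : EuclideanSpace ℝ (Fin d)) u : ℝ):ℂ))
      = ((-b * ‖u‖^2 : ℝ) : ℂ) := by push_cast; ring
  rw [e, Complex.ofReal_re]

private lemma gaussKer_li {d m : ℕ} (b : ℝ) (hb : 0 < b) (x : Fin m → EuclideanSpace ℝ (Fin d))
    (hx : Function.Injective x) (c : Fin m → ℝ)
    (hg : ∀ t : EuclideanSpace ℝ (Fin d), ∑ j, c j * Real.exp (-b * ‖t - x j‖^2) = 0) :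
    c = 0 := by
  let φ : Fin m → Multiplicative (EuclideanSpace ℝ (Fin d)) →* ℝ := fun j =>
    { toFun := fun t => Real.exp (2 * b * (inner ℝ (x j) t.toAdd : ℝ))
      map_one' := by simp
      map_mul' := fun s t => by
        simp [← Real.exp_add, inner_add_right, mul_add] }
  have hφinj : Function.Injective φ := by
    intro i j h
    have h2 := congrArg
      (fun ψ : Multiplicative (EuclideanSpace ℝ (Fin d)) →* ℝ =>
        ψ (Multiplicative.ofAdd (x i - x j))) h
    simp only [φ, MonoidHom.coe_mk, OneHom.coe_mk, toAdd_ofAdd] at h2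
    have h3 : 2 * b * (inner ℝ (x i) (x i - x j) : ℝ) = 2 * b * (inner ℝ (x j) (x i - x j) : ℝ) :=
      Real.exp_injective h2
    have h4 : (inner ℝ (x i) (x i - x j) : ℝ) = (inner ℝ (x j) (x i - x j) : ℝ) :=
      mul_left_cancel₀ (by positivity) h3
    have h5 : (inner ℝ (x i - x j) (x i - x j) : ℝ) = 0 := by
      rw [inner_sub_left]; linarith
    exact hx (sub_eq_zero.mp (inner_self_eq_zero.mp h5))
  have hli : LinearIndependent ℝ
      (fun j => (φ j : Multiplicative (EuclideanSpace ℝ (Fin d)) → ℝ)) :=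
    (linearIndependent_monoidHom (Multiplicative (EuclideanSpace ℝ (Fin d))) ℝ).comp φ hφinj
  have key := Fintype.linearIndependent_iff.mp hli (fun j => c j * Real.exp (-b * ‖x j‖^2))
  have hz : ∑ j, (c j * Real.exp (-b * ‖x j‖^2)) •
      (φ j : Multiplicative (EuclideanSpace ℝ (Fin d)) → ℝ) = 0 := by
    funext t
    have ht := hg t.toAdd
    have expand : ∀ j, c j * Real.exp (-b * ‖t.toAdd - x j‖^2)
        = ((c j * Real.exp (-b * ‖x j‖^2)) * Real.exp (2 * b * (inner ℝ (x j) t.toAdd : ℝ)))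
          * Real.exp (-b * ‖t.toAdd‖^2) := by
      intro j
      rw [mul_assoc, mul_assoc, ← Real.exp_add, ← Real.exp_add]
      congr 1
      have : ‖t.toAdd - x j‖^2 = ‖t.toAdd‖^2 - 2 * (inner ℝ t.toAdd (x j) : ℝ) + ‖x j‖^2 :=
        norm_sub_sq_real _ _
      rw [this, real_inner_comm]
      ring
    simp only [expand, ← Finset.sum_mul] at ht
    have hne : Real.exp (-b * ‖t.toAdd‖^2) ≠ 0 := Real.exp_ne_zero _
    have := (mul_eq_zero.mp ht).resolve_right hne
    simpa [Pi.smul_apply, smul_eq_mul, Finset.sum_apply, φ] using this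
  funext j
  have := key hz j
  have hexp : Real.exp (-b * ‖x j‖^2) ≠ 0 := Real.exp_ne_zero _
  exact (mul_eq_zero.mp this).resolve_right hexp

private lemma gaussKer_posdef {d m : ℕ} (σ : ℝ) (hσ : 0 < σ)
    (x : Fin m → EuclideanSpace ℝ (Fin d)) (hx : Function.Injective x) :
    (Matrix.of fun i j : Fin m => Real.exp (-(1 / σ) * ‖x i - x j‖ ^ 2)).PosDef := by
  classical
  set f : Fin m → EuclideanSpace ℝ (Fin d) → ℝ :=
    fun j t => Real.exp (-(2/σ) * ‖t - x j‖^2) with hf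
  set C : ℝ := ∫ u : EuclideanSpace ℝ (Fin d), Real.exp (-(4/σ) * ‖u‖^2) with hC
  have hC0 : 0 < C := by
    rw [hC, GaussianFourier.integral_rexp_neg_mul_sq_norm (by positivity)]
    positivity
  have hprod : ∀ i j t, f i t * f j t
      = Real.exp (-(4/σ) * ‖t - (2:ℝ)⁻¹ • (x i + x j)‖^2)
        * Real.exp (-(1/σ) * ‖x i - x j‖^2) :=
    fun i j t => gaussKer_prod σ hσ (x i) (x j) t
  have hint : ∀ i j, Integrable (fun t => f i t * f j t) := by
    intro i j
    have h := ((gaussKer_integrable (d := d) (4/σ) (by positivity)).comp_sub_right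
      ((2:ℝ)⁻¹ • (x i + x j))).mul_const (Real.exp (-(1/σ) * ‖x i - x j‖^2))
    exact h.congr (Filter.Eventually.of_forall fun t => (hprod i j t).symm)
  have hval : ∀ i j, ∫ t, f i t * f j t = C * Real.exp (-(1/σ) * ‖x i - x j‖^2) := by
    intro i j
    simp_rw [hprod i j]
    rw [MeasureTheory.integral_mul_const, hC]
    congr 1
    exact integral_sub_right_eq_self (fun u => Real.exp (-(4/σ) * ‖u‖^2)) _
  refine Matrix.PosDef.of_dotProduct_mulVec_pos ?_ ?_
  · ext i j
    simp only [Matrix.conjTranspose_apply, Matrix.of_apply, star_trivial]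
    rw [norm_sub_rev]
  · intro c hc
    have hdot : dotProduct (star c) ((Matrix.of fun i j : Fin m =>
          Real.exp (-(1 / σ) * ‖x i - x j‖ ^ 2)).mulVec c)
        = ∑ i, ∑ j, (c i * c j) * Real.exp (-(1/σ) * ‖x i - x j‖^2) := by
      simp only [dotProduct, Matrix.mulVec, Matrix.of_apply, Pi.star_apply,
        star_trivial, Finset.mul_sum]
      exact Finset.sum_congr rfl fun i _ => Finset.sum_congr rfl fun j _ => by ring
    rw [hdot]
    have expand : ∀ t, (∑ j, c j * f j t)^2 = ∑ i, ∑ j, (c i * c j) * (f i t * f j t) := by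
      intro t
      rw [sq, Finset.sum_mul_sum]
      exact Finset.sum_congr rfl fun i _ => Finset.sum_congr rfl fun j _ => by ring
    have hIg2 : Integrable (fun t => (∑ j, c j * f j t)^2) := by
      have h : Integrable (fun t => ∑ i, ∑ j, (c i * c j) * (f i t * f j t)) :=
        integrable_finset_sum _ fun i _ =>
          integrable_finset_sum _ fun j _ => (hint i j).const_mul _
      exact h.congr (Filter.Eventually.of_forall fun t => (expand t).symm)
    have hsum : C * (∑ i, ∑ j, (c i * c j) * Real.exp (-(1/σ) * ‖x i - x j‖^2))
        = ∫ t, (∑ j, c j * f j t)^2 := by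
      calc C * (∑ i, ∑ j, (c i * c j) * Real.exp (-(1/σ) * ‖x i - x j‖^2))
          = ∑ i, ∑ j, (c i * c j) * (C * Real.exp (-(1/σ) * ‖x i - x j‖^2)) := by
            rw [Finset.mul_sum]
            exact Finset.sum_congr rfl fun i _ => by
              rw [Finset.mul_sum]
              exact Finset.sum_congr rfl fun j _ => by ring
        _ = ∑ i, ∑ j, (c i * c j) * ∫ t, f i t * f j t := by
            exact Finset.sum_congr rfl fun i _ => Finset.sum_congr rfl fun j _ => by
              rw [hval i j]
        _ = ∑ i, ∑ j, ∫ t, (c i * c j) * (f i t * f j t) := by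
            exact Finset.sum_congr rfl fun i _ => Finset.sum_congr rfl fun j _ =>
              (MeasureTheory.integral_const_mul _ _).symm
        _ = ∫ t, ∑ i, ∑ j, (c i * c j) * (f i t * f j t) := by
            rw [MeasureTheory.integral_finset_sum _ fun i _ =>
              integrable_finset_sum _ fun j _ => (hint i j).const_mul _]
            exact Finset.sum_congr rfl fun i _ =>
              (MeasureTheory.integral_finset_sum _ fun j _ => (hint i j).const_mul _).symm
        _ = ∫ t, (∑ j, c j * f j t)^2 := by
            congr 1
            funext t
            exact (expand t).symm
    -- the sum function is not identically zero
    have hnz : ∃ t0, (∑ j, c j * f j t0) ≠ 0 := by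
      by_contra h
      push_neg at h
      exact hc (gaussKer_li (2/σ) (by positivity) x hx c h)
    obtain ⟨t0, ht0⟩ := hnz
    have hpos : 0 < ∫ t, (∑ j, c j * f j t)^2 := by
      rcases lt_or_ge 0 (∫ t, (∑ j, c j * f j t)^2) with h | h
      · exact h
      exfalso
      have h0 : ∫ t, (∑ j, c j * f j t)^2 = 0 :=
        le_antisymm h (integral_nonneg fun t => sq_nonneg _)
      have hae := (MeasureTheory.integral_eq_zero_iff_of_nonneg
        (fun t => sq_nonneg (∑ j, c j * f j t)) hIg2).mp h0
      have hcont : Continuous (fun t => (∑ j, c j * f j t)^2) := by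
        apply Continuous.pow
        apply continuous_finset_sum
        intro j _
        exact continuous_const.mul
          ((continuous_const.mul ((continuous_id.sub continuous_const).norm.pow 2)).rexp)
      have heq : (fun t => (∑ j, c j * f j t)^2) = 0 :=
        (Continuous.ae_eq_iff_eq volume hcont continuous_const).mp hae
      have := congrFun heq t0
      simp only [Pi.zero_apply] at this
      exact ht0 (by nlinarith [this])
    nlinarith [hsum, hpos, hC0]

/-- For pairwise distinct points `x₁,…,x_m ∈ ℝ^d` and `σ > 0`, the Gaussian kernel
matrix `K_{ij} = exp(−‖xᵢ−xⱼ‖²/σ)` has full rank (is invertible). -/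
theorem gaussian_kernel_matrix_invertible {d m : ℕ} (σ : ℝ) (hσ : 0 < σ)
    (x : Fin m → EuclideanSpace ℝ (Fin d)) (hx : Function.Injective x) :
    IsUnit (Matrix.of fun i j : Fin m => Real.exp (-(1 / σ) * ‖x i - x j‖ ^ 2)) :=
  (gaussKer_posdef σ hσ x hx).isUnit
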